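/- Let n ≥ 1, let E = EuclideanSpace ℝ (Fin n), and let r be a congruence on the star partial homeomorphisms of E which is not the identity congruence, i.e. there exist star partial homeomorphisms α and β with r α β and ¬(α ≈ β). Then r identifies all idempotents: for all stars L₁ and L₂ in E, r (PartialEquiv.ofSet L₁) (PartialEquiv.ofSet L₂). (Since a congruence on an inverse semigroup identifying all idempotents is a group congruence, every non-unit congruence on the semigroup of star partial homeomorphisms is a group congruence.) -/

import Mathlib

noncomputable def radial {n : ℕ} (L : Set (EuclideanSpace ℝ (Fin n)))
    (u : EuclideanSpace ℝ (Fin n)) : ℝ :=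
  sSup {c : ℝ | 0 ≤ c ∧ c • u ∈ L}

def IsStar {n : ℕ} (L : Set (EuclideanSpace ℝ (Fin n))) : Prop :=
  IsCompact L ∧ (0 : EuclideanSpace ℝ (Fin n)) ∈ interior L ∧
    (∀ x ∈ L, segment ℝ 0 x ⊆ L) ∧
    ContinuousOn (radial L) (Metric.sphere (0 : EuclideanSpace ℝ (Fin n)) 1)

def IsStarPartialHomeo {n : ℕ}
    (α : PartialEquiv (EuclideanSpace ℝ (Fin n)) (EuclideanSpace ℝ (Fin n))) : Prop :=
  IsStar α.source ∧ IsStar α.target ∧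
    ContinuousOn α α.source ∧ ContinuousOn α.symm α.target ∧
    α 0 = 0 ∧ ∀ x ∈ α.source, α '' (segment ℝ 0 x) = segment ℝ 0 (α x)

def IsCongruence {n : ℕ}
    (r : PartialEquiv (EuclideanSpace ℝ (Fin n)) (EuclideanSpace ℝ (Fin n)) →
         PartialEquiv (EuclideanSpace ℝ (Fin n)) (EuclideanSpace ℝ (Fin n)) → Prop) : Prop :=
  (∀ α, IsStarPartialHomeo α → r α α) ∧
  (∀ α β, IsStarPartialHomeo α → IsStarPartialHomeo β → r α β → r β α) ∧
  (∀ α β γ, IsStarPartialHomeo α → IsStarPartialHomeo β → IsStarPartialHomeo γ →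
    r α β → r β γ → r α γ) ∧
  (∀ α α' β β', IsStarPartialHomeo α → IsStarPartialHomeo α' →
    IsStarPartialHomeo β → IsStarPartialHomeo β' →
    α ≈ α' → β ≈ β' → (r α β ↔ r α' β')) ∧
  (∀ α β γ, IsStarPartialHomeo α → IsStarPartialHomeo β → IsStarPartialHomeo γ →
    r α β → r (γ.trans α) (γ.trans β) ∧ r (α.trans γ) (β.trans γ))
namespace Star17
set_option linter.unusedSectionVars false

open Set Metric

abbrev Euc (n : ℕ) := EuclideanSpace ℝ (Fin n)

variable {n : ℕ}

noncomputable def unitv (x : Euc n) : Euc n := ‖x‖⁻¹ • x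

def Sf (n : ℕ) (f : Euc n → ℝ) : Set (Euc n) := {x | x = 0 ∨ ‖x‖ ≤ f (unitv x)}

def Adm (f : Euc n → ℝ) : Prop :=
  ContinuousOn f (Metric.sphere (0 : Euc n) 1) ∧ ∀ u ∈ Metric.sphere (0 : Euc n) 1, 0 < f u

def StarChar (L : Set (Euc n)) : Prop :=
  IsCompact L ∧ (0 : Euc n) ∈ interior L ∧ (∀ x ∈ L, segment ℝ 0 x ⊆ L) ∧
    ∀ x ∈ L, ∀ t : ℝ, 0 ≤ t → t < 1 → t • x ∈ interior L

lemma norm_unitv {x : Euc n} (hx : x ≠ 0) : ‖unitv x‖ = 1 := by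
  rw [unitv, norm_smul, norm_inv, norm_norm, inv_mul_cancel₀ (norm_ne_zero_iff.mpr hx)]

lemma unitv_mem_sphere {x : Euc n} (hx : x ≠ 0) : unitv x ∈ Metric.sphere (0 : Euc n) 1 := by
  simp [mem_sphere_iff_norm, norm_unitv hx]

lemma smul_unitv {x : Euc n} (hx : x ≠ 0) : ‖x‖ • unitv x = x := by
  rw [unitv, smul_smul, mul_inv_cancel₀ (norm_ne_zero_iff.mpr hx), one_smul]

lemma unitv_smul {x : Euc n} {c : ℝ} (hc : 0 < c) : unitv (c • x) = unitv x := by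
  rcases eq_or_ne x 0 with rfl | hx
  · simp [unitv]
  · have hx' : ‖x‖ ≠ 0 := norm_ne_zero_iff.mpr hx
    rw [unitv, unitv, smul_smul, norm_smul, Real.norm_eq_abs, abs_of_pos hc]
    congr 1
    field_simp

lemma unitv_sphere {u : Euc n} (hu : u ∈ Metric.sphere (0 : Euc n) 1) : unitv u = u := by
  rw [unitv, mem_sphere_iff_norm, sub_zero] at *
  rw [hu, inv_one, one_smul]

lemma segment_zero (y : Euc n) :
    segment ℝ (0 : Euc n) y = (fun t : ℝ => t • y) '' Set.Icc (0:ℝ) 1 := by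
  rw [segment_eq_image]; simp

lemma smul_mem_segment_zero {y : Euc n} {t : ℝ} (h0 : 0 ≤ t) (h1 : t ≤ 1) :
    t • y ∈ segment ℝ (0 : Euc n) y := by
  rw [segment_zero]; exact ⟨t, ⟨h0, h1⟩, rfl⟩

section RadialBasic

variable {L : Set (Euc n)} (hC : IsCompact L) (h0 : (0 : Euc n) ∈ interior L)
  (hS : ∀ x ∈ L, segment ℝ 0 x ⊆ L)

include hC h0

lemma zero_mem : (0 : Euc n) ∈ L := interior_subset h0

lemma Cset_nonempty (u : Euc n) : ({c : ℝ | 0 ≤ c ∧ c • u ∈ L}).Nonempty :=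
  ⟨0, le_refl 0, by simpa using zero_mem hC h0⟩

lemma Cset_bdd {u : Euc n} (hu : u ∈ Metric.sphere (0 : Euc n) 1) :
    BddAbove {c : ℝ | 0 ≤ c ∧ c • u ∈ L} := by
  obtain ⟨R, hR⟩ := hC.isBounded.subset_closedBall 0
  refine ⟨R, fun c hc => ?_⟩
  have := hR hc.2
  rw [Metric.mem_closedBall, dist_zero_right, norm_smul, Real.norm_eq_abs,
    abs_of_nonneg hc.1] at this
  rw [mem_sphere_iff_norm, sub_zero] at hu
  simpa [hu] using this

lemma radial_nonneg {u : Euc n} (hu : u ∈ Metric.sphere (0 : Euc n) 1) : 0 ≤ radial L u :=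
  le_csSup (Cset_bdd hC h0 hu) ⟨le_refl 0, by simpa using zero_mem hC h0⟩

lemma le_radial {u : Euc n} (hu : u ∈ Metric.sphere (0 : Euc n) 1) {c : ℝ}
    (hc : 0 ≤ c) (hm : c • u ∈ L) : c ≤ radial L u :=
  le_csSup (Cset_bdd hC h0 hu) ⟨hc, hm⟩

lemma radial_pos {u : Euc n} (hu : u ∈ Metric.sphere (0 : Euc n) 1) : 0 < radial L u := by
  obtain ⟨ε, hε, hball⟩ := Metric.isOpen_iff.1 isOpen_interior 0 h0
  have hm : (ε/2) • u ∈ L := by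
    apply interior_subset; apply hball
    rw [Metric.mem_ball, dist_zero_right, norm_smul, Real.norm_eq_abs,
      abs_of_nonneg (by linarith : (0:ℝ) ≤ ε/2)]
    rw [mem_sphere_iff_norm, sub_zero] at hu
    rw [hu]; linarith
  calc (0:ℝ) < ε/2 := by linarith
    _ ≤ radial L u := le_radial hC h0 hu (by linarith) hm

lemma radial_smul_mem {u : Euc n} (hu : u ∈ Metric.sphere (0 : Euc n) 1) :
    radial L u • u ∈ L := by
  have hclosed : IsClosed {c : ℝ | 0 ≤ c ∧ c • u ∈ L} := by
    apply IsClosed.inter (isClosed_le continuous_const continuous_id)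
    exact hC.isClosed.preimage (continuous_id.smul continuous_const)
  obtain ⟨R, hR⟩ := Cset_bdd hC h0 hu
  have hcpt : IsCompact {c : ℝ | 0 ≤ c ∧ c • u ∈ L} := by
    apply (isCompact_Icc (a := (0:ℝ)) (b := R)).of_isClosed_subset hclosed
    exact fun c hc => ⟨hc.1, hR hc⟩
  exact (hcpt.sSup_mem (Cset_nonempty hC h0 u)).2

include hS in
lemma smul_mem_of_le_radial {u : Euc n} (hu : u ∈ Metric.sphere (0 : Euc n) 1) {c : ℝ}
    (hc0 : 0 ≤ c) (hcr : c ≤ radial L u) : c • u ∈ L := by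
  have hpos := radial_pos hC h0 hu
  have : c • u ∈ segment ℝ (0 : Euc n) (radial L u • u) := by
    have : c • u = (c / radial L u) • (radial L u • u) := by
      rw [smul_smul, div_mul_cancel₀ _ hpos.ne']
    rw [this]
    exact smul_mem_segment_zero (div_nonneg hc0 hpos.le) ((div_le_one hpos).2 hcr)
  exact hS _ (radial_smul_mem hC h0 hu) this

include hS in
lemma mem_iff_radial {x : Euc n} :
    x ∈ L ↔ x = 0 ∨ ‖x‖ ≤ radial L (unitv x) := by
  constructor
  · intro hx
    rcases eq_or_ne x 0 with rfl | hx0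
    · exact Or.inl rfl
    · refine Or.inr (le_radial hC h0 (unitv_mem_sphere hx0) (norm_nonneg x) ?_)
      rw [smul_unitv hx0]; exact hx
  · rintro (rfl | hle)
    · exact zero_mem hC h0
    · rcases eq_or_ne x 0 with rfl | hx0
      · exact zero_mem hC h0
      · have := smul_mem_of_le_radial hC h0 hS (unitv_mem_sphere hx0) (norm_nonneg x) hle
        rwa [smul_unitv hx0] at this

include hS in
lemma eq_Sf_radial : L = Sf n (radial L) := by
  ext x; rw [mem_iff_radial hC h0 hS]; rfl

end RadialBasic

end Star17
namespace Star17

open Set Metric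

variable {n : ℕ}

lemma continuousOn_unitv :
    ContinuousOn (unitv : Euc n → Euc n) {y : Euc n | y ≠ 0} := by
  apply ContinuousOn.smul (f := fun y : Euc n => ‖y‖⁻¹) (g := id)
  · exact (continuous_norm.continuousOn).inv₀ (fun y hy => norm_ne_zero_iff.mpr hy)
  · exact continuousOn_id

lemma unitv_mapsTo : Set.MapsTo (unitv : Euc n → Euc n) {y : Euc n | y ≠ 0}
    (Metric.sphere (0 : Euc n) 1) := fun y hy => unitv_mem_sphere hy

lemma isOpen_lt_comp {f : Euc n → ℝ} (hf : ContinuousOn f (Metric.sphere (0 : Euc n) 1)) :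
    IsOpen {y : Euc n | y ≠ 0 ∧ ‖y‖ < f (unitv y)} := by
  have h1 : ContinuousOn (fun y : Euc n => f (unitv y) - ‖y‖) {y : Euc n | y ≠ 0} :=
    ContinuousOn.sub (hf.comp continuousOn_unitv unitv_mapsTo) continuous_norm.continuousOn
  have h2 : IsOpen {y : Euc n | y ≠ 0} := isOpen_ne
  have := h1.isOpen_inter_preimage h2 (isOpen_Ioi (a := (0:ℝ)))
  convert this using 1
  ext y
  simp only [Set.mem_setOf_eq, Set.mem_inter_iff, Set.mem_preimage, Set.mem_Ioi]
  exact and_congr_right (fun _ => by constructor <;> intro <;> linarith)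

lemma isStar_iff_starChar {L : Set (Euc n)} : IsStar L ↔ StarChar L := by
  constructor
  · rintro ⟨hC, h0, hS, hcont⟩
    refine ⟨hC, h0, hS, ?_⟩
    intro x hx t ht0 ht1
    have hU : IsOpen {y : Euc n | y ≠ 0 ∧ ‖y‖ < radial L (unitv y)} := isOpen_lt_comp hcont
    have hUL : {y : Euc n | y ≠ 0 ∧ ‖y‖ < radial L (unitv y)} ⊆ L := by
      intro y hy
      exact (mem_iff_radial hC h0 hS).2 (Or.inr hy.2.le)
    rcases eq_or_ne x 0 with rfl | hx0
    · simpa using h0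
    rcases eq_or_lt_of_le ht0 with rfl | ht0'
    · simpa using h0
    have htx : t • x ≠ 0 := smul_ne_zero ht0'.ne' hx0
    have hmem : t • x ∈ {y : Euc n | y ≠ 0 ∧ ‖y‖ < radial L (unitv y)} := by
      refine ⟨htx, ?_⟩
      have hxle : ‖x‖ ≤ radial L (unitv x) := by
        rcases (mem_iff_radial hC h0 hS).1 hx with h | h
        · exact absurd h hx0
        · exact h
      rw [unitv_smul ht0', norm_smul, Real.norm_eq_abs, abs_of_pos ht0']
      have : t * ‖x‖ < ‖x‖ := by
        have := norm_pos_iff.2 hx0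
        nlinarith
      linarith
    exact interior_maximal hUL hU hmem
  · rintro ⟨hC, h0, hS, hchar⟩
    refine ⟨hC, h0, hS, ?_⟩
    intro u hu
    rw [Metric.continuousWithinAt_iff]
    intro ε hε
    -- upper bound
    have upper : ∃ δ > 0, ∀ v ∈ Metric.sphere (0 : Euc n) 1, dist v u < δ →
        radial L v < radial L u + ε / 2 := by
      by_contra hcon
      push_neg at hcon
      have hcon' : ∀ k : ℕ, ∃ v ∈ Metric.sphere (0 : Euc n) 1,
          dist v u < 1 / (k + 1) ∧ radial L u + ε / 2 ≤ radial L v := by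
        intro k
        obtain ⟨v, hv, hd, hr⟩ := hcon (1 / (k + 1)) (by positivity)
        exact ⟨v, hv, hd, hr⟩
      choose v hv hd hr using hcon'
      have htend : Filter.Tendsto v Filter.atTop (nhds u) := by
        rw [tendsto_iff_dist_tendsto_zero]
        apply squeeze_zero (fun k => dist_nonneg) (fun k => (hd k).le)
        exact tendsto_one_div_add_atTop_nhds_zero_nat
      have hmem : ∀ k, (radial L u + ε / 2) • v k ∈ L := by
        intro k
        apply smul_mem_of_le_radial hC h0 hS (hv k) _ (hr k)
        have := radial_nonneg hC h0 hu
        linarith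
      have hlim : (radial L u + ε / 2) • u ∈ L := by
        apply hC.isClosed.mem_of_tendsto (Filter.Tendsto.const_smul htend _)
        exact Filter.Eventually.of_forall hmem
      have : radial L u + ε / 2 ≤ radial L u := by
        apply le_radial hC h0 hu _ hlim
        have := radial_nonneg hC h0 hu
        linarith
      linarith
    -- lower bound
    have lower : ∃ δ > 0, ∀ v ∈ Metric.sphere (0 : Euc n) 1, dist v u < δ →
        radial L u - ε < radial L v := by
      rcases le_or_gt (radial L u) (ε / 2) with hle | hgt
      · refine ⟨1, one_pos, fun v hv _ => ?_⟩
        have := radial_pos hC h0 hv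
        linarith
      · obtain ⟨c, hc⟩ : ∃ c : ℝ, c = radial L u - ε / 2 := ⟨_, rfl⟩
        have hc0 : 0 < c := by rw [hc]; linarith
        have hru : 0 < radial L u := by linarith
        have hcu : c • u ∈ interior L := by
          have : c • u = (c / radial L u) • (radial L u • u) := by
            rw [smul_smul, div_mul_cancel₀ _ hru.ne']
          rw [this]
          exact hchar _ (radial_smul_mem hC h0 hu) _ (div_nonneg hc0.le hru.le)
            ((div_lt_one hru).2 (by linarith))
        have hopen : IsOpen {v : Euc n | c • v ∈ interior L} :=
          isOpen_interior.preimage (continuous_const_smul c)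
        obtain ⟨δ, hδ, hball⟩ := Metric.isOpen_iff.1 hopen u hcu
        refine ⟨δ, hδ, fun v hv hd => ?_⟩
        have : c • v ∈ L := interior_subset (hball hd)
        have := le_radial hC h0 hv hc0.le this
        linarith
    obtain ⟨δ₁, hδ₁, hup⟩ := upper
    obtain ⟨δ₂, hδ₂, hlo⟩ := lower
    refine ⟨min δ₁ δ₂, lt_min hδ₁ hδ₂, fun {v} hv hd => ?_⟩
    have h1 := hup v hv (lt_of_lt_of_le hd (min_le_left _ _))
    have h2 := hlo v hv (lt_of_lt_of_le hd (min_le_right _ _))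
    rw [Real.dist_eq, abs_lt]
    constructor <;> linarith

end Star17
namespace Star17

open Set Metric

variable {n : ℕ}

lemma mem_Sf {f : Euc n → ℝ} {x : Euc n} :
    x ∈ Sf n f ↔ x = 0 ∨ ‖x‖ ≤ f (unitv x) := Iff.rfl

lemma zero_mem_Sf {f : Euc n → ℝ} : (0 : Euc n) ∈ Sf n f := Or.inl rfl

lemma Sf_mono {f g : Euc n → ℝ}
    (h : ∀ u ∈ Metric.sphere (0 : Euc n) 1, f u ≤ g u) : Sf n f ⊆ Sf n g := by
  rintro x (rfl | hx)
  · exact zero_mem_Sf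
  · rcases eq_or_ne x 0 with rfl | hx0
    · exact zero_mem_Sf
    · exact Or.inr (le_trans hx (h _ (unitv_mem_sphere hx0)))

lemma Sf_congr {f g : Euc n → ℝ}
    (h : ∀ u ∈ Metric.sphere (0 : Euc n) 1, f u = g u) : Sf n f = Sf n g :=
  Set.Subset.antisymm (Sf_mono fun u hu => (h u hu).le) (Sf_mono fun u hu => (h u hu).ge)

lemma Sf_inter {f g : Euc n → ℝ} :
    Sf n f ∩ Sf n g = Sf n (fun u => min (f u) (g u)) := by
  ext x
  rcases eq_or_ne x 0 with rfl | hx0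
  · simp [zero_mem_Sf]
  · simp only [mem_inter_iff, mem_Sf, hx0, false_or, le_min_iff]

lemma isOpen_gt_comp {f : Euc n → ℝ} (hf : ContinuousOn f (Metric.sphere (0 : Euc n) 1)) :
    IsOpen {y : Euc n | y ≠ 0 ∧ f (unitv y) < ‖y‖} := by
  have h1 : ContinuousOn (fun y : Euc n => f (unitv y) - ‖y‖) {y : Euc n | y ≠ 0} :=
    ContinuousOn.sub (hf.comp continuousOn_unitv unitv_mapsTo) continuous_norm.continuousOn
  have := h1.isOpen_inter_preimage isOpen_ne (isOpen_Iio (a := (0:ℝ)))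
  convert this using 1
  ext y
  simp only [Set.mem_setOf_eq, Set.mem_inter_iff, Set.mem_preimage, Set.mem_Iio]
  exact and_congr_right (fun _ => by constructor <;> intro <;> linarith)

variable (hn : 1 ≤ n)

include hn in
lemma sphere_nonempty' : (Metric.sphere (0 : Euc n) 1).Nonempty := by
  have h1 : ‖(EuclideanSpace.single (⟨0, hn⟩ : Fin n) (1:ℝ))‖ = 1 := by simp
  haveI : Nontrivial (Euc n) :=
    ⟨⟨EuclideanSpace.single (⟨0, hn⟩ : Fin n) (1:ℝ), 0, fun h => by rw [h] at h1; simp at h1⟩⟩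
  exact NormedSpace.sphere_nonempty.mpr zero_le_one

include hn in
lemma isStar_Sf {f : Euc n → ℝ} (hf : Adm f) : IsStar (Sf n f) := by
  obtain ⟨hfc, hfp⟩ := hf
  -- minimum of f on the sphere
  obtain ⟨u₀, hu₀, hmin⟩ := (isCompact_sphere (0 : Euc n) 1).exists_isMinOn
    (sphere_nonempty' hn) hfc
  have hm : 0 < f u₀ := hfp u₀ hu₀
  have h0i : (0 : Euc n) ∈ interior (Sf n f) := by
    rw [mem_interior]
    refine ⟨Metric.ball 0 (f u₀), ?_, Metric.isOpen_ball, Metric.mem_ball_self hm⟩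
    intro x hx
    rcases eq_or_ne x 0 with rfl | hx0
    · exact zero_mem_Sf
    · refine Or.inr ?_
      rw [Metric.mem_ball, dist_zero_right] at hx
      exact le_trans hx.le (hmin (unitv_mem_sphere hx0))
  have hclosed : IsClosed (Sf n f) := by
    rw [← isOpen_compl_iff]
    convert isOpen_gt_comp hfc using 1
    ext y
    simp only [mem_compl_iff, mem_Sf, Set.mem_setOf_eq, not_or, not_le]
  have hstar : ∀ x ∈ Sf n f, segment ℝ 0 x ⊆ Sf n f := by
    intro x hx y hy
    rw [segment_zero] at hy
    obtain ⟨t, ⟨ht0, ht1⟩, rfl⟩ := hy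
    rcases eq_or_ne x 0 with rfl | hx0
    · simpa using zero_mem_Sf
    rcases eq_or_lt_of_le ht0 with rfl | ht0'
    · simpa using zero_mem_Sf
    refine Or.inr ?_
    rw [unitv_smul ht0', norm_smul, Real.norm_eq_abs, abs_of_pos ht0']
    rcases hx with rfl | hx
    · exact absurd rfl hx0
    · nlinarith [norm_nonneg x, hx]
  rw [isStar_iff_starChar]
  refine ⟨?_, h0i, hstar, ?_⟩
  · -- compact
    obtain ⟨C, hC⟩ := (isCompact_sphere (0 : Euc n) 1).exists_bound_of_continuousOn hfc
    rw [Metric.isCompact_iff_isClosed_bounded]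
    refine ⟨hclosed, Metric.isBounded_iff_subset_closedBall 0 |>.2 ⟨|C| + 1, ?_⟩⟩
    rintro x (rfl | hx)
    · simp only [Metric.mem_closedBall, dist_self]; positivity
    · rcases eq_or_ne x 0 with rfl | hx0
      · simp only [Metric.mem_closedBall, dist_self]; positivity
      · rw [Metric.mem_closedBall, dist_zero_right]
        have h1 := hC _ (unitv_mem_sphere hx0)
        rw [Real.norm_eq_abs] at h1
        have h2 := le_abs_self (f (unitv x))
        have h3 := le_abs_self C
        linarith
  · -- char
    intro x hx t ht0 ht1
    rcases eq_or_ne x 0 with rfl | hx0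
    · simpa using h0i
    rcases eq_or_lt_of_le ht0 with rfl | ht0'
    · simpa using h0i
    have hU : IsOpen {y : Euc n | y ≠ 0 ∧ ‖y‖ < f (unitv y)} := isOpen_lt_comp hfc
    have hUL : {y : Euc n | y ≠ 0 ∧ ‖y‖ < f (unitv y)} ⊆ Sf n f := fun y hy => Or.inr hy.2.le
    apply interior_maximal hUL hU
    refine ⟨smul_ne_zero ht0'.ne' hx0, ?_⟩
    rw [unitv_smul ht0', norm_smul, Real.norm_eq_abs, abs_of_pos ht0']
    rcases hx with rfl | hx
    · exact absurd rfl hx0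
    · nlinarith [norm_pos_iff.2 hx0, hx]

lemma isStar_inter {A B : Set (Euc n)} (hA : IsStar A) (hB : IsStar B) :
    IsStar (A ∩ B) := by
  rw [isStar_iff_starChar] at *
  obtain ⟨hA1, hA2, hA3, hA4⟩ := hA
  obtain ⟨hB1, hB2, hB3, hB4⟩ := hB
  refine ⟨hA1.inter_right hB1.isClosed, ?_, ?_, ?_⟩
  · rw [interior_inter]; exact ⟨hA2, hB2⟩
  · exact fun x hx => subset_inter (hA3 x hx.1) (hB3 x hx.2)
  · intro x hx t ht0 ht1
    rw [interior_inter]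
    exact ⟨hA4 x hx.1 t ht0 ht1, hB4 x hx.2 t ht0 ht1⟩

lemma isStar_radial_adm {L : Set (Euc n)} (hL : IsStar L) : Adm (radial L) :=
  ⟨hL.2.2.2, fun u hu => radial_pos hL.1 hL.2.1 hu⟩

lemma isStar_eq_Sf {L : Set (Euc n)} (hL : IsStar L) : L = Sf n (radial L) :=
  eq_Sf_radial hL.1 hL.2.1 hL.2.2.1

lemma radial_mono {A B : Set (Euc n)} (hA : IsStar A) (hB : IsStar B) (hAB : A ⊆ B)
    {u : Euc n} (hu : u ∈ Metric.sphere (0 : Euc n) 1) : radial A u ≤ radial B u := by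
  apply csSup_le_csSup (Cset_bdd hB.1 hB.2.1 hu) (Cset_nonempty hA.1 hA.2.1 u)
  exact fun c hc => ⟨hc.1, hAB hc.2⟩

lemma radial_gap {A B : Set (Euc n)} (hA : IsStar A) (hB : IsStar B) (hAB : A ⊆ B)
    (hne : A ≠ B) : ∃ u ∈ Metric.sphere (0 : Euc n) 1, radial A u < radial B u := by
  obtain ⟨x, hxB, hxA⟩ := Set.exists_of_ssubset (ssubset_of_subset_of_ne hAB hne)
  have hx0 : x ≠ 0 := by rintro rfl; exact hxA (interior_subset hA.2.1)
  refine ⟨unitv x, unitv_mem_sphere hx0, ?_⟩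
  have h1 : radial A (unitv x) < ‖x‖ := by
    by_contra h
    push_neg at h
    exact hxA ((mem_iff_radial hA.1 hA.2.1 hA.2.2.1).2 (Or.inr h))
  have h2 : ‖x‖ ≤ radial B (unitv x) := by
    rcases (mem_iff_radial hB.1 hB.2.1 hB.2.2.1).1 hxB with rfl | h
    · exact absurd rfl hx0
    · exact h
  linarith

end Star17
namespace Star17

open Set Metric PartialEquiv

variable {n : ℕ}

lemma sph_zero_mem_source {α : PartialEquiv (Euc n) (Euc n)} (hα : IsStarPartialHomeo α) :
    (0 : Euc n) ∈ α.source := interior_subset hα.1.2.1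

lemma sph_zero_mem_target {α : PartialEquiv (Euc n) (Euc n)} (hα : IsStarPartialHomeo α) :
    (0 : Euc n) ∈ α.target := interior_subset hα.2.1.2.1

lemma sph_symm_zero {α : PartialEquiv (Euc n) (Euc n)} (hα : IsStarPartialHomeo α) :
    α.symm 0 = 0 := by
  conv_lhs => rw [← hα.2.2.2.2.1]
  exact α.left_inv (sph_zero_mem_source hα)

lemma sph_ofSet {L : Set (Euc n)} (hL : IsStar L) :
    IsStarPartialHomeo (PartialEquiv.ofSet L) := by
  refine ⟨?_, ?_, ?_, ?_, ?_, ?_⟩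
  · rwa [ofSet_source]
  · rwa [ofSet_target]
  · rw [ofSet_coe]; exact continuousOn_id
  · rw [ofSet_symm, ofSet_coe]; exact continuousOn_id
  · rw [ofSet_coe]; rfl
  · intro x _
    rw [ofSet_coe]
    simp

lemma sph_symm {α : PartialEquiv (Euc n) (Euc n)} (hα : IsStarPartialHomeo α) :
    IsStarPartialHomeo α.symm := by
  obtain ⟨hsrc, htgt, hcont, hcont', h0, hseg⟩ := hα
  refine ⟨htgt, by rwa [symm_target], hcont', by rwa [symm_symm, symm_target], ?_, ?_⟩
  · exact sph_symm_zero ⟨hsrc, htgt, hcont, hcont', h0, hseg⟩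
  · intro y hy
    rw [symm_source] at hy
    set x := α.symm y with hx
    have hxs : x ∈ α.source := α.map_target hy
    have hsegsub : segment ℝ 0 x ⊆ α.source := hsrc.2.2.1 x hxs
    have h1 : α '' segment ℝ 0 x = segment ℝ 0 y := by
      rw [hseg x hxs, hx, α.right_inv hy]
    calc α.symm '' segment ℝ 0 y = α.symm '' (α '' segment ℝ 0 x) := by rw [h1]
      _ = segment ℝ 0 x := α.symm_image_image_of_subset_source hsegsub
      _ = segment ℝ 0 (α.symm y) := rfl

lemma isStar_image {ψ : PartialEquiv (Euc n) (Euc n)} (hψ : IsStarPartialHomeo ψ)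
    {N : Set (Euc n)} (hN : IsStar N) (hsub : N ⊆ ψ.source) : IsStar (ψ '' N) := by
  have hψ' := hψ
  obtain ⟨hsrc, htgt, hcont, hcont', h0, hseg⟩ := hψ
  have hsymm0 : ψ.symm 0 = 0 := sph_symm_zero hψ'
  have h0tgt : (0 : Euc n) ∈ interior ψ.target := htgt.2.1
  have h0N : (0 : Euc n) ∈ interior N := hN.2.1
  have htgtchar := (isStar_iff_starChar.1 htgt).2.2.2
  have hNchar := (isStar_iff_starChar.1 hN).2.2.2
  -- key: a set in nhds of a point implies membership in image
  have himg : ∀ z : Euc n, z ∈ interior ψ.target → ψ.symm z ∈ interior N →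
      ψ '' N ∈ nhds z := by
    intro z hz hz'
    have hca : ContinuousAt ψ.symm z :=
      hcont'.continuousAt (mem_interior_iff_mem_nhds.1 hz)
    have hpre : ψ.symm ⁻¹' interior N ∈ nhds z :=
      hca.preimage_mem_nhds (isOpen_interior.mem_nhds hz')
    have htgtnhds : ψ.target ∈ nhds z := mem_interior_iff_mem_nhds.1 hz
    apply Filter.mem_of_superset (Filter.inter_mem htgtnhds hpre)
    rintro w ⟨hw1, hw2⟩
    exact ⟨ψ.symm w, interior_subset hw2, ψ.right_inv hw1⟩
  rw [isStar_iff_starChar]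
  refine ⟨hN.1.image_of_continuousOn (hcont.mono hsub), ?_, ?_, ?_⟩
  · rw [mem_interior_iff_mem_nhds]
    exact himg 0 h0tgt (by rwa [hsymm0])
  · rintro y ⟨x, hx, rfl⟩
    rw [← hseg x (hsub hx)]
    exact Set.image_mono (hN.2.2.1 x hx)
  · rintro y ⟨x, hx, rfl⟩ t ht0 ht1
    rcases eq_or_ne (ψ x) 0 with hy0 | hy0
    · rw [hy0, smul_zero, mem_interior_iff_mem_nhds]
      exact himg 0 h0tgt (by rwa [hsymm0])
    have hx0 : x ≠ 0 := by rintro rfl; exact hy0 h0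
    have hxs : x ∈ ψ.source := hsub hx
    have hts : t • ψ x ∈ segment ℝ 0 (ψ x) := smul_mem_segment_zero ht0 ht1.le
    rw [← hseg x hxs] at hts
    obtain ⟨z, hz, hzeq⟩ := hts
    rw [segment_zero] at hz
    obtain ⟨s, ⟨hs0, hs1⟩, rfl⟩ := hz
    have hzeq : (ψ : Euc n → Euc n) (s • x) = t • ψ x := hzeq
    have hs1' : s < 1 := by
      rcases lt_or_eq_of_le hs1 with h | h
      · exact h
      · exfalso
        subst h
        rw [one_smul] at hzeq
        have hz2 : (1 - t) • ψ x = 0 := by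
          rw [sub_smul, one_smul]
          nth_rewrite 1 [hzeq]
          exact sub_self _
        rcases smul_eq_zero.1 hz2 with h' | h'
        · have : t = 1 := by linarith [sub_eq_zero.1 h']
          exact ht1.ne this
        · exact hy0 h'
    have hsxN : s • x ∈ interior N := hNchar x hx s hs0 hs1'
    have htyT : t • ψ x ∈ interior ψ.target :=
      htgtchar (ψ x) (ψ.map_source hxs) t ht0 ht1
    have hsymm_ty : ψ.symm (t • ψ x) = s • x := by
      rw [← hzeq]
      exact ψ.left_inv (hsub (interior_subset hsxN))
    rw [mem_interior_iff_mem_nhds]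
    exact himg _ htyT (by rwa [hsymm_ty])

lemma sph_trans {α γ : PartialEquiv (Euc n) (Euc n)} (hα : IsStarPartialHomeo α)
    (hγ : IsStarPartialHomeo γ) : IsStarPartialHomeo (α.trans γ) := by
  have hsrc : IsStar ((α.trans γ).source) := by
    rw [trans_source'']
    exact isStar_image (sph_symm hα) (isStar_inter hα.2.1 hγ.1)
      (by rw [symm_source]; exact inter_subset_left)
  have htgt : IsStar ((α.trans γ).target) := by
    rw [trans_target'']
    exact isStar_image hγ (isStar_inter hγ.1 hα.2.1)
      inter_subset_left
  refine ⟨hsrc, htgt, ?_, ?_, ?_, ?_⟩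
  · rw [coe_trans]
    apply ContinuousOn.comp (hγ.2.2.1) (hα.2.2.1.mono ?_) ?_
    · rw [trans_source]; exact inter_subset_left
    · rw [trans_source]; intro x hx; exact hx.2
  · rw [coe_trans_symm]
    apply ContinuousOn.comp (hα.2.2.2.1) (hγ.2.2.2.1.mono ?_) ?_
    · rw [trans_target]; exact inter_subset_left
    · rw [trans_target]; intro x hx; exact hx.2
  · rw [trans_apply, hα.2.2.2.2.1, hγ.2.2.2.2.1]
  · intro x hx
    rw [trans_source] at hx
    rw [trans_apply, coe_trans, Set.image_comp, hα.2.2.2.2.2 x hx.1, hγ.2.2.2.2.2 _ hx.2]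

end Star17
namespace Star17

open Set Metric PartialEquiv

variable {n : ℕ} {r : PartialEquiv (Euc n) (Euc n) → PartialEquiv (Euc n) (Euc n) → Prop}

lemma idlike_eqOnSource {e : PartialEquiv (Euc n) (Euc n)} {M : Set (Euc n)}
    (hsrc : e.source = M) (hcoe : ∀ x ∈ e.source, e x = x) :
    e ≈ PartialEquiv.ofSet M :=
  ⟨by rw [hsrc, ofSet_source], fun x hx => by rw [hcoe x hx, ofSet_coe, id]⟩

lemma trans_ofSet_eqOnSource {e : PartialEquiv (Euc n) (Euc n)} {L : Set (Euc n)}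
    (h : ∀ y ∈ e.source, e y ∈ L) : e.trans (PartialEquiv.ofSet L) ≈ e := by
  constructor
  · rw [trans_source, ofSet_source]
    exact Set.inter_eq_left.2 (fun x hx => h x hx)
  · intro x hx
    rw [trans_source] at hx
    rw [trans_apply, ofSet_coe, id]

lemma ofSet_trans_eqOnSource {e : PartialEquiv (Euc n) (Euc n)} {L : Set (Euc n)}
    (h : e.source ⊆ L) : (PartialEquiv.ofSet L).trans e ≈ e := by
  constructor
  · rw [trans_source, ofSet_source, ofSet_coe, preimage_id]
    exact Set.inter_eq_right.2 h
  · intro x hx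
    rw [trans_apply, ofSet_coe, id]

lemma image_subset_source_eq {e : PartialEquiv (Euc n) (Euc n)} {A : Set (Euc n)}
    (h : A ⊆ e.source) : e '' A = e.target ∩ e.symm ⁻¹' A := by
  ext y
  constructor
  · rintro ⟨x, hx, rfl⟩
    exact ⟨e.map_source (h hx), by rwa [Set.mem_preimage, e.left_inv (h hx)]⟩
  · rintro ⟨hy1, hy2⟩
    exact ⟨e.symm y, hy2, e.right_inv hy1⟩

variable (hr : IsCongruence r)

include hr

lemma resp {α α' β β' : PartialEquiv (Euc n) (Euc n)}
    (h1 : IsStarPartialHomeo α) (h2 : IsStarPartialHomeo α')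
    (h3 : IsStarPartialHomeo β) (h4 : IsStarPartialHomeo β')
    (e1 : α ≈ α') (e2 : β ≈ β') (h : r α β) : r α' β' :=
  (hr.2.2.2.1 α α' β β' h1 h2 h3 h4 e1 e2).1 h

lemma congE1 {σ : PartialEquiv (Euc n) (Euc n)} {L : Set (Euc n)}
    (hσ : IsStarPartialHomeo σ) (hL : IsStar L) (hsub : σ.source ⊆ L)
    (h : r σ (PartialEquiv.ofSet L)) : r (PartialEquiv.ofSet σ.target) σ.symm := by
  have h1 : r (σ.symm.trans σ) (σ.symm.trans (PartialEquiv.ofSet L)) :=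
    (hr.2.2.2.2 σ (PartialEquiv.ofSet L) σ.symm hσ (sph_ofSet hL) (sph_symm hσ) h).1
  have e1 : σ.symm.trans σ ≈ PartialEquiv.ofSet σ.target := symm_trans_self σ
  have e2 : σ.symm.trans (PartialEquiv.ofSet L) ≈ σ.symm :=
    trans_ofSet_eqOnSource (fun y hy => hsub (σ.map_target (by rwa [symm_source] at hy)))
  exact resp hr (sph_trans (sph_symm hσ) hσ)
    (sph_ofSet hσ.2.1)
    (sph_trans (sph_symm hσ) (sph_ofSet hL)) (sph_symm hσ) e1 e2 h1

lemma congE2 {σ : PartialEquiv (Euc n) (Euc n)} {L : Set (Euc n)}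
    (hσ : IsStarPartialHomeo σ) (hL : IsStar L) (hsub : σ.source ⊆ L)
    (h : r σ (PartialEquiv.ofSet L)) :
    r (PartialEquiv.ofSet σ.source) (PartialEquiv.ofSet L) := by
  have h1 : r (PartialEquiv.ofSet σ.target) σ.symm := congE1 hr hσ hL hsub h
  have h2 : r (σ.trans (PartialEquiv.ofSet σ.target)) (σ.trans σ.symm) :=
    (hr.2.2.2.2 (PartialEquiv.ofSet σ.target) σ.symm σ
      (sph_ofSet hσ.2.1) (sph_symm hσ) hσ h1).1
  have e1 : σ.trans (PartialEquiv.ofSet σ.target) ≈ σ :=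
    trans_ofSet_eqOnSource (fun y hy => σ.map_source hy)
  have e2 : σ.trans σ.symm ≈ PartialEquiv.ofSet σ.source := self_trans_symm σ
  have h3 : r σ (PartialEquiv.ofSet σ.source) :=
    resp hr (sph_trans hσ (sph_ofSet hσ.2.1)) hσ
      (sph_trans hσ (sph_symm hσ)) (sph_ofSet hσ.1) e1 e2 h2
  have h4 : r (PartialEquiv.ofSet σ.source) σ :=
    hr.2.1 _ _ hσ (sph_ofSet hσ.1) h3
  exact hr.2.2.1 _ _ _ (sph_ofSet hσ.1) hσ (sph_ofSet hL) h4 h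

lemma congSymmRel {σ : PartialEquiv (Euc n) (Euc n)} {L : Set (Euc n)}
    (hσ : IsStarPartialHomeo σ) (hL : IsStar L) (hsub : σ.source ⊆ L)
    (h : r σ (PartialEquiv.ofSet L)) : r σ.symm (PartialEquiv.ofSet σ.target) :=
  hr.2.1 _ _ (sph_ofSet hσ.2.1) (sph_symm hσ) (congE1 hr hσ hL hsub h)

/-- Compression of a relation `r σ (ofSet L)` by an idempotent `ofSet K`. -/
lemma congCompress {σ : PartialEquiv (Euc n) (Euc n)} {L K : Set (Euc n)}
    (hσ : IsStarPartialHomeo σ) (hL : IsStar L) (hK : IsStar K) (hsub : σ.source ⊆ L)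
    (h : r σ (PartialEquiv.ofSet L)) :
    ∃ A : Set (Euc n), IsStar A ∧ A ⊆ K ∩ L ∧
      (∀ x, x ∈ A ↔ x ∈ K ∧ x ∈ σ.source ∧ σ x ∈ K) ∧
      r (PartialEquiv.ofSet A) (PartialEquiv.ofSet (K ∩ L)) := by
  set eK := PartialEquiv.ofSet K with heK
  set eL := PartialEquiv.ofSet L with heL
  have hKs := sph_ofSet hK
  have hLs := sph_ofSet hL
  have h1 : r (eK.trans σ) (eK.trans eL) :=
    (hr.2.2.2.2 σ eL eK hσ hLs hKs h).1
  have h2 : r ((eK.trans σ).trans eK) ((eK.trans eL).trans eK) :=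
    (hr.2.2.2.2 (eK.trans σ) (eK.trans eL) eK
      (sph_trans hKs hσ) (sph_trans hKs hLs) hKs h1).2
  set σ' := (eK.trans σ).trans eK with hσ'def
  have hσ's : IsStarPartialHomeo σ' := sph_trans (sph_trans hKs hσ) hKs
  have hrhs : IsStarPartialHomeo ((eK.trans eL).trans eK) :=
    sph_trans (sph_trans hKs hLs) hKs
  have hKL : IsStar (K ∩ L) := isStar_inter hK hL
  have e2 : (eK.trans eL).trans eK ≈ PartialEquiv.ofSet (K ∩ L) := by
    apply idlike_eqOnSource
    · rw [trans_source, trans_source, heK, heL, ofSet_source, ofSet_source, ofSet_coe,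
        preimage_id, coe_trans, ofSet_coe, ofSet_coe]
      simp only [Function.comp_id, preimage_id]
      ext x
      constructor
      · rintro ⟨⟨h1', h2'⟩, _⟩; exact ⟨h1', h2'⟩
      · rintro ⟨h1', h2'⟩; exact ⟨⟨h1', h2'⟩, h1'⟩
    · intro x _
      rw [trans_apply, trans_apply, heK, heL, ofSet_coe, ofSet_coe, id, id, id]
  have h3 : r σ' (PartialEquiv.ofSet (K ∩ L)) :=
    resp hr hσ's hσ's hrhs (sph_ofSet hKL) (Setoid.refl σ') e2 h2
  have hsrc : σ'.source = {x | x ∈ K ∧ x ∈ σ.source ∧ σ x ∈ K} := by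
    rw [hσ'def, trans_source, trans_source, heK, ofSet_source, ofSet_coe, preimage_id,
      coe_trans, ofSet_coe]
    ext x
    simp only [Function.comp_id, Set.mem_inter_iff, Set.mem_preimage, Set.mem_setOf_eq,
      Function.comp_apply, id_eq]
    tauto
  have hsub' : σ'.source ⊆ K ∩ L := by
    rw [hsrc]
    rintro x ⟨hx1, hx2, _⟩
    exact ⟨hx1, hsub hx2⟩
  refine ⟨σ'.source, hσ's.1, hsub', ?_, congE2 hr hσ's hKL hsub' h3⟩
  intro x
  rw [hsrc]
  rfl

lemma congConj {ψ : PartialEquiv (Euc n) (Euc n)} {A B : Set (Euc n)}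
    (hψ : IsStarPartialHomeo ψ) (hA : IsStar A) (hB : IsStar B)
    (hAs : A ⊆ ψ.source) (hBs : B ⊆ ψ.source)
    (h : r (PartialEquiv.ofSet A) (PartialEquiv.ofSet B)) :
    r (PartialEquiv.ofSet (ψ '' A)) (PartialEquiv.ofSet (ψ '' B)) := by
  have hAe := sph_ofSet hA
  have hBe := sph_ofSet hB
  have h1 : r (ψ.symm.trans (PartialEquiv.ofSet A)) (ψ.symm.trans (PartialEquiv.ofSet B)) :=
    (hr.2.2.2.2 _ _ ψ.symm hAe hBe (sph_symm hψ) h).1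
  have h2 : r ((ψ.symm.trans (PartialEquiv.ofSet A)).trans ψ)
      ((ψ.symm.trans (PartialEquiv.ofSet B)).trans ψ) :=
    (hr.2.2.2.2 _ _ ψ (sph_trans (sph_symm hψ) hAe) (sph_trans (sph_symm hψ) hBe) hψ h1).2
  have key : ∀ (C : Set (Euc n)), C ⊆ ψ.source →
      (ψ.symm.trans (PartialEquiv.ofSet C)).trans ψ ≈ PartialEquiv.ofSet (ψ '' C) := by
    intro C hCs
    apply idlike_eqOnSource
    · rw [trans_source, trans_source, ofSet_source, symm_source, coe_trans, ofSet_coe,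
        image_subset_source_eq hCs]
      ext y
      simp only [Set.mem_inter_iff, Set.mem_preimage, Function.comp_apply, id_eq,
        Function.id_comp]
      constructor
      · rintro ⟨⟨hy1, hy2⟩, _⟩; exact ⟨hy1, hy2⟩
      · rintro ⟨hy1, hy2⟩
        exact ⟨⟨hy1, hy2⟩, ψ.map_target hy1⟩
    · intro y hy
      rw [trans_source, trans_source, symm_source] at hy
      simp only [trans_apply, ofSet_coe, id_eq]
      exact ψ.right_inv hy.1.1
  have hψA : IsStar (ψ '' A) := isStar_image hψ hA hAs
  have hψB : IsStar (ψ '' B) := isStar_image hψ hB hBs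
  exact resp hr (sph_trans (sph_trans (sph_symm hψ) hAe) hψ) (sph_ofSet hψA)
    (sph_trans (sph_trans (sph_symm hψ) hBe) hψ) (sph_ofSet hψB)
    (key A hAs) (key B hBs) h2

end Star17
namespace Star17

open Set Metric PartialEquiv

variable {n : ℕ}

noncomputable def rmap (k : Euc n → ℝ) (x : Euc n) : Euc n := k (unitv x) • x

@[simp] lemma rmap_zero (k : Euc n → ℝ) : rmap k 0 = 0 := by simp [rmap]

lemma rmap_smul (k : Euc n → ℝ) {t : ℝ} (ht : 0 < t) (x : Euc n) :
    rmap k (t • x) = t • rmap k x := by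
  rw [rmap, rmap, unitv_smul ht, smul_comm]

lemma norm_rmap (k : Euc n → ℝ) (x : Euc n) : ‖rmap k x‖ = |k (unitv x)| * ‖x‖ := by
  rw [rmap, norm_smul, Real.norm_eq_abs]

lemma unitv_rmap {k : Euc n → ℝ} {x : Euc n} (hk : 0 < k (unitv x)) :
    unitv (rmap k x) = unitv x := by
  rcases eq_or_ne x 0 with rfl | hx
  · simp
  · rw [rmap, unitv_smul hk]

lemma rmap_cancel {f g : Euc n → ℝ} (hf : Adm f) (hg : Adm g) (x : Euc n) :
    rmap (fun u => f u / g u) (rmap (fun u => g u / f u) x) = x := by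
  rcases eq_or_ne x 0 with rfl | hx
  · simp
  · have hu := unitv_mem_sphere hx
    have hfp := hf.2 _ hu
    have hgp := hg.2 _ hu
    have hk : 0 < g (unitv x) / f (unitv x) := div_pos hgp hfp
    have h1 : unitv (rmap (fun u => g u / f u) x) = unitv x := unitv_rmap hk
    rw [rmap, h1, rmap, smul_smul]
    have h2 : f (unitv x) / g (unitv x) * (g (unitv x) / f (unitv x)) = 1 := by
      field_simp
    rw [h2, one_smul]

lemma continuous_rmap {k : Euc n → ℝ} (hk : ContinuousOn k (Metric.sphere (0 : Euc n) 1))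
    {C : ℝ} (hC0 : 0 ≤ C) (hC : ∀ u ∈ Metric.sphere (0 : Euc n) 1, |k u| ≤ C) :
    Continuous (rmap k) := by
  rw [continuous_iff_continuousAt]
  intro x
  rcases eq_or_ne x 0 with rfl | hx
  · rw [ContinuousAt, rmap_zero]
    rw [Metric.tendsto_nhds_nhds]
    intro ε hε
    refine ⟨ε / (C + 1), by positivity, fun {y} hy => ?_⟩
    rcases eq_or_ne y 0 with rfl | hy0
    · simpa using hε
    · rw [dist_zero_right] at hy ⊢
      rw [norm_rmap]
      have h1 : |k (unitv y)| ≤ C := hC _ (unitv_mem_sphere hy0)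
      have h2 : ‖y‖ < ε / (C + 1) := hy
      have h3 : 0 ≤ ‖y‖ := norm_nonneg y
      have h4 : |k (unitv y)| * ‖y‖ ≤ C * ‖y‖ := by nlinarith [abs_nonneg (k (unitv y))]
      calc |k (unitv y)| * ‖y‖ ≤ C * ‖y‖ := h4
        _ < ε := by
          have h5 : (C+1) * ‖y‖ < (C+1) * (ε/(C+1)) := by nlinarith
          have h6 : (C+1) * (ε/(C+1)) = ε := by field_simp
          nlinarith
  · have hco : ContinuousOn (rmap k) {y : Euc n | y ≠ 0} :=
      ((hk.comp continuousOn_unitv unitv_mapsTo).smul continuousOn_id)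
    exact hco.continuousAt (isOpen_ne.mem_nhds hx)

lemma rmap_mem_Sf {f g : Euc n → ℝ} (hf : Adm f) (hg : Adm g) {x : Euc n} (hx : x ∈ Sf n f) :
    rmap (fun u => g u / f u) x ∈ Sf n g := by
  rcases eq_or_ne x 0 with rfl | hx0
  · simp [zero_mem_Sf]
  · have hu := unitv_mem_sphere hx0
    have hfp := hf.2 _ hu
    have hgp := hg.2 _ hu
    have hk : 0 < g (unitv x) / f (unitv x) := div_pos hgp hfp
    refine Or.inr ?_
    rw [unitv_rmap hk, norm_rmap, abs_of_pos hk]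
    have hxf : ‖x‖ ≤ f (unitv x) := by
      rcases hx with rfl | h
      · exact absurd rfl hx0
      · exact h
    calc g (unitv x) / f (unitv x) * ‖x‖ ≤ g (unitv x) / f (unitv x) * f (unitv x) := by
          nlinarith
      _ = g (unitv x) := div_mul_cancel₀ _ hfp.ne'

noncomputable def rhomeo (f g : Euc n → ℝ) (hf : Adm f) (hg : Adm g) :
    PartialEquiv (Euc n) (Euc n) where
  toFun := rmap (fun u => g u / f u)
  invFun := rmap (fun u => f u / g u)
  source := Sf n f
  target := Sf n g
  map_source' := fun _ hx => rmap_mem_Sf hf hg hx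
  map_target' := fun _ hx => rmap_mem_Sf hg hf hx
  left_inv' := fun x _ => rmap_cancel hf hg x
  right_inv' := fun x _ => rmap_cancel hg hf x

@[simp] lemma rhomeo_source {f g : Euc n → ℝ} (hf : Adm f) (hg : Adm g) :
    (rhomeo f g hf hg).source = Sf n f := rfl

@[simp] lemma rhomeo_target {f g : Euc n → ℝ} (hf : Adm f) (hg : Adm g) :
    (rhomeo f g hf hg).target = Sf n g := rfl

@[simp] lemma rhomeo_coe {f g : Euc n → ℝ} (hf : Adm f) (hg : Adm g) :
    ((rhomeo f g hf hg) : Euc n → Euc n) = rmap (fun u => g u / f u) := rfl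

@[simp] lemma rhomeo_symm_coe {f g : Euc n → ℝ} (hf : Adm f) (hg : Adm g) :
    ((rhomeo f g hf hg).symm : Euc n → Euc n) = rmap (fun u => f u / g u) := rfl

lemma adm_div {f g : Euc n → ℝ} (hf : Adm f) (hg : Adm g) :
    Adm (fun u => f u / g u) :=
  ⟨hf.1.div hg.1 (fun u hu => (hg.2 u hu).ne'), fun u hu => div_pos (hf.2 u hu) (hg.2 u hu)⟩

lemma adm_bound {k : Euc n → ℝ} (hk : ContinuousOn k (Metric.sphere (0 : Euc n) 1)) :
    ∃ C : ℝ, 0 ≤ C ∧ ∀ u ∈ Metric.sphere (0 : Euc n) 1, |k u| ≤ C := by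
  obtain ⟨C, hC⟩ := (isCompact_sphere (0 : Euc n) 1).exists_bound_of_continuousOn hk
  exact ⟨max C 0, le_max_right _ _, fun u hu => le_trans (by
    simpa [Real.norm_eq_abs] using hC u hu) (le_max_left _ _)⟩

lemma rmap_image_segment {k : Euc n → ℝ} (x : Euc n) :
    rmap k '' segment ℝ 0 x = segment ℝ 0 (rmap k x) := by
  rw [segment_zero, segment_zero, ← Set.image_comp]
  apply Set.image_congr
  intro t ht
  simp only [Function.comp_apply]
  rcases eq_or_lt_of_le ht.1 with rfl | htpos
  · simp
  · exact rmap_smul k htpos x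

lemma sph_rhomeo (hn : 1 ≤ n) {f g : Euc n → ℝ} (hf : Adm f) (hg : Adm g) :
    IsStarPartialHomeo (rhomeo f g hf hg) := by
  obtain ⟨C, hC0, hC⟩ := adm_bound (adm_div hg hf).1
  obtain ⟨C', hC0', hC'⟩ := adm_bound (adm_div hf hg).1
  refine ⟨by rw [rhomeo_source]; exact isStar_Sf hn hf,
    by rw [rhomeo_target]; exact isStar_Sf hn hg, ?_, ?_, ?_, ?_⟩
  · rw [rhomeo_coe]; exact (continuous_rmap (adm_div hg hf).1 hC0 hC).continuousOn
  · rw [rhomeo_symm_coe]; exact (continuous_rmap (adm_div hf hg).1 hC0' hC').continuousOn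
  · rw [rhomeo_coe, rmap_zero]
  · intro x _
    rw [rhomeo_coe]
    exact rmap_image_segment x

lemma rhomeo_image {f g m : Euc n → ℝ} (hf : Adm f) (hg : Adm g) (hm : Adm m)
    (hmf : ∀ u ∈ Metric.sphere (0 : Euc n) 1, m u ≤ f u) :
    (rhomeo f g hf hg) '' (Sf n m) = Sf n (fun u => g u / f u * m u) := by
  rw [rhomeo_coe]
  ext y
  constructor
  · rintro ⟨x, hx, rfl⟩
    rcases eq_or_ne x 0 with rfl | hx0
    · simp [zero_mem_Sf]
    · have hu := unitv_mem_sphere hx0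
      have hfp := hf.2 _ hu
      have hgp := hg.2 _ hu
      have hk : 0 < g (unitv x) / f (unitv x) := div_pos hgp hfp
      refine Or.inr ?_
      rw [unitv_rmap hk, norm_rmap, abs_of_pos hk]
      have hxm : ‖x‖ ≤ m (unitv x) := by
        rcases hx with rfl | h
        · exact absurd rfl hx0
        · exact h
      nlinarith
  · intro hy
    rcases eq_or_ne y 0 with rfl | hy0
    · exact ⟨0, zero_mem_Sf, by simp⟩
    · have hu := unitv_mem_sphere hy0
      have hfp := hf.2 _ hu
      have hgp := hg.2 _ hu
      have hmp := hm.2 _ hu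
      have hk' : 0 < f (unitv y) / g (unitv y) := div_pos hfp hgp
      refine ⟨rmap (fun u => f u / g u) y, ?_, rmap_cancel hg hf y⟩
      rcases hy with rfl | hy
      · exact absurd rfl hy0
      · have hy' : ‖y‖ ≤ g (unitv y) / f (unitv y) * m (unitv y) := hy
        refine Or.inr ?_
        rw [unitv_rmap hk', norm_rmap, abs_of_pos hk']
        have hy2 : ‖y‖ * f (unitv y) ≤ g (unitv y) * m (unitv y) := by
          have h3 := mul_le_mul_of_nonneg_right hy' hfp.le
          calc ‖y‖ * f (unitv y)
              ≤ g (unitv y) / f (unitv y) * m (unitv y) * f (unitv y) := h3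
            _ = g (unitv y) * m (unitv y) := by field_simp
        rw [div_mul_eq_mul_div, div_le_iff₀ hgp]
        nlinarith

end Star17
namespace Star17

open Set Metric PartialEquiv

variable {n : ℕ}

noncomputable def isoPE (T : Euc n ≃ₗᵢ[ℝ] Euc n) (L : Set (Euc n)) : PartialEquiv (Euc n) (Euc n) where
  toFun := T
  invFun := T.symm
  source := L
  target := T '' L
  map_source' := fun x hx => ⟨x, hx, rfl⟩
  map_target' := by rintro y ⟨x, hx, rfl⟩; simpa using hx
  left_inv' := fun x _ => T.symm_apply_apply x
  right_inv' := by rintro y ⟨x, hx, rfl⟩; rw [T.symm_apply_apply]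

@[simp] lemma isoPE_source (T : Euc n ≃ₗᵢ[ℝ] Euc n) (L : Set (Euc n)) :
    (isoPE T L).source = L := rfl

@[simp] lemma isoPE_target (T : Euc n ≃ₗᵢ[ℝ] Euc n) (L : Set (Euc n)) :
    (isoPE T L).target = T '' L := rfl

@[simp] lemma isoPE_coe (T : Euc n ≃ₗᵢ[ℝ] Euc n) (L : Set (Euc n)) :
    ((isoPE T L) : Euc n → Euc n) = T := rfl

@[simp] lemma isoPE_symm_coe (T : Euc n ≃ₗᵢ[ℝ] Euc n) (L : Set (Euc n)) :
    ((isoPE T L).symm : Euc n → Euc n) = T.symm := rfl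

lemma iso_image_segment (T : Euc n ≃ₗᵢ[ℝ] Euc n) (x : Euc n) :
    T '' segment ℝ 0 x = segment ℝ 0 (T x) := by
  have := image_segment ℝ (T.toLinearIsometry.toLinearMap.toAffineMap) 0 x
  simpa using this

lemma isStar_iso_image (T : Euc n ≃ₗᵢ[ℝ] Euc n) {L : Set (Euc n)} (hL : IsStar L) :
    IsStar (T '' L) := by
  rw [isStar_iff_starChar] at hL ⊢
  obtain ⟨h1, h2, h3, h4⟩ := hL
  have hint : T '' interior L = interior (T '' L) := T.toHomeomorph.image_interior L
  refine ⟨h1.image T.continuous, ?_, ?_, ?_⟩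
  · rw [← hint]
    exact ⟨0, h2, map_zero T⟩
  · rintro y ⟨x, hx, rfl⟩
    rw [← iso_image_segment]
    exact Set.image_mono (h3 x hx)
  · rintro y ⟨x, hx, rfl⟩ t ht0 ht1
    rw [← hint]
    exact ⟨t • x, h4 x hx t ht0 ht1, by rw [map_smul]⟩

lemma sph_isoPE (T : Euc n ≃ₗᵢ[ℝ] Euc n) {L : Set (Euc n)} (hL : IsStar L) :
    IsStarPartialHomeo (isoPE T L) := by
  refine ⟨hL, isStar_iso_image T hL, ?_, ?_, ?_, ?_⟩
  · rw [isoPE_coe]; exact T.continuous.continuousOn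
  · rw [isoPE_symm_coe]; exact T.symm.continuous.continuousOn
  · rw [isoPE_coe]; exact map_zero T
  · intro x _
    rw [isoPE_coe]
    exact iso_image_segment T x

lemma unitv_iso (T : Euc n ≃ₗᵢ[ℝ] Euc n) (x : Euc n) : unitv (T x) = T (unitv x) := by
  rw [unitv, unitv, T.norm_map, map_smul]

lemma iso_image_Sf (T : Euc n ≃ₗᵢ[ℝ] Euc n) (m : Euc n → ℝ) :
    T '' Sf n m = Sf n (fun u => m (T.symm u)) := by
  ext y
  constructor
  · rintro ⟨x, hx, rfl⟩
    rcases hx with rfl | hx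
    · exact Or.inl (map_zero T)
    · refine Or.inr ?_
      rw [T.norm_map]
      show ‖x‖ ≤ m (T.symm (unitv (T x)))
      rw [unitv_iso, T.symm_apply_apply]
      exact hx
  · intro hy
    refine ⟨T.symm y, ?_, T.apply_symm_apply y⟩
    rcases hy with rfl | hy
    · exact Or.inl (map_zero T.symm)
    · have hy' : ‖y‖ ≤ m (T.symm (unitv y)) := hy
      refine Or.inr ?_
      rw [unitv_iso T.symm, T.symm.norm_map]
      exact hy'

lemma exists_iso_sphere (hn : 1 ≤ n) {u v : Euc n}
    (hu : u ∈ Metric.sphere (0 : Euc n) 1) (hv : v ∈ Metric.sphere (0 : Euc n) 1) :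
    ∃ T : Euc n ≃ₗᵢ[ℝ] Euc n, T u = v := by
  rcases eq_or_ne u v with rfl | huv
  · exact ⟨LinearIsometryEquiv.refl ℝ (Euc n), rfl⟩
  · refine ⟨Submodule.reflection (ℝ ∙ (u - v))ᗮ, ?_⟩
    apply Submodule.reflection_sub
    rw [mem_sphere_iff_norm, sub_zero] at hu hv
    rw [hu, hv]

end Star17
namespace Star17

open Set Metric PartialEquiv

variable {n : ℕ} {r : PartialEquiv (Euc n) (Euc n) → PartialEquiv (Euc n) (Euc n) → Prop}

def Prel (r : PartialEquiv (Euc n) (Euc n) → PartialEquiv (Euc n) (Euc n) → Prop)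
    (f g : Euc n → ℝ) : Prop :=
  r (PartialEquiv.ofSet (Sf n f)) (PartialEquiv.ofSet (Sf n g))

variable (hn : 1 ≤ n) (hr : IsCongruence r)

section P

variable {f g k : Euc n → ℝ}

lemma adm_max (hf : Adm f) (hg : Adm g) : Adm (fun u => max (f u) (g u)) :=
  ⟨fun x hx => (hf.1 x hx).max (hg.1 x hx), fun u hu => lt_max_of_lt_left (hf.2 u hu)⟩

lemma adm_min (hf : Adm f) (hg : Adm g) : Adm (fun u => min (f u) (g u)) :=
  ⟨fun x hx => (hf.1 x hx).min (hg.1 x hx), fun u hu => lt_min (hf.2 u hu) (hg.2 u hu)⟩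

lemma adm_mul (hf : Adm f) (hg : Adm g) : Adm (fun u => f u * g u) :=
  ⟨hf.1.mul hg.1, fun u hu => mul_pos (hf.2 u hu) (hg.2 u hu)⟩

lemma adm_comp_iso (hf : Adm f) (T : Euc n ≃ₗᵢ[ℝ] Euc n) : Adm (fun u => f (T.symm u)) := by
  constructor
  · apply hf.1.comp T.symm.continuous.continuousOn
    intro u hu
    rw [mem_sphere_iff_norm, sub_zero] at hu ⊢
    rw [T.symm.norm_map, hu]
  · intro u hu
    apply hf.2
    rw [mem_sphere_iff_norm, sub_zero] at hu ⊢
    rw [T.symm.norm_map, hu]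

include hn hr

lemma Prefl (hf : Adm f) : Prel r f f := hr.1 _ (sph_ofSet (isStar_Sf hn hf))

lemma Psymm (hf : Adm f) (hg : Adm g) (h : Prel r f g) : Prel r g f :=
  hr.2.1 _ _ (sph_ofSet (isStar_Sf hn hf)) (sph_ofSet (isStar_Sf hn hg)) h

lemma Ptrans (hf : Adm f) (hg : Adm g) (hk : Adm k) (h1 : Prel r f g) (h2 : Prel r g k) :
    Prel r f k :=
  hr.2.2.1 _ _ _ (sph_ofSet (isStar_Sf hn hf)) (sph_ofSet (isStar_Sf hn hg))
    (sph_ofSet (isStar_Sf hn hk)) h1 h2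

omit hn hr in
lemma Pcongr {f' g' : Euc n → ℝ}
    (h1 : ∀ u ∈ Metric.sphere (0 : Euc n) 1, f u = f' u)
    (h2 : ∀ u ∈ Metric.sphere (0 : Euc n) 1, g u = g' u)
    (h : Prel r f g) : Prel r f' g' := by
  rw [Prel, ← Sf_congr h1, ← Sf_congr h2]
  exact h

lemma Pmult (hf : Adm f) (hg : Adm g) (hk : Adm k) (h : Prel r f g) :
    Prel r (fun u => k u * f u) (fun u => k u * g u) := by
  set F := fun u : Euc n => max (f u) (g u) with hF
  have hFa : Adm F := adm_max hf hg
  have hkF : Adm (fun u => k u * F u) := adm_mul hk hFa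
  set ψ := rhomeo F (fun u => k u * F u) hFa hkF with hψ
  have hψs : IsStarPartialHomeo ψ := sph_rhomeo hn hFa hkF
  have hfF : ∀ u ∈ Metric.sphere (0 : Euc n) 1, f u ≤ F u := fun u _ => le_max_left _ _
  have hgF : ∀ u ∈ Metric.sphere (0 : Euc n) 1, g u ≤ F u := fun u _ => le_max_right _ _
  have hsub1 : Sf n f ⊆ ψ.source := by rw [hψ, rhomeo_source]; exact Sf_mono hfF
  have hsub2 : Sf n g ⊆ ψ.source := by rw [hψ, rhomeo_source]; exact Sf_mono hgF
  have hconj := congConj hr hψs (isStar_Sf hn hf) (isStar_Sf hn hg) hsub1 hsub2 h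
  have himg : ∀ m : Euc n → ℝ, Adm m → (∀ u ∈ Metric.sphere (0 : Euc n) 1, m u ≤ F u) →
      ψ '' Sf n m = Sf n (fun u => k u * m u) := by
    intro m hm hmF
    rw [hψ, rhomeo_image hFa hkF hm hmF]
    apply Sf_congr
    intro u hu
    have := hFa.2 u hu
    field_simp
  rw [himg f hf hfF, himg g hg hgF] at hconj
  exact hconj

lemma Pmeet (hf : Adm f) (hg : Adm g) (hk : Adm k) (h : Prel r f g) :
    Prel r (fun u => min (k u) (f u)) (fun u => min (k u) (g u)) := by
  have hKs := sph_ofSet (isStar_Sf hn hk)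
  have hfs := sph_ofSet (isStar_Sf hn hf)
  have hgs := sph_ofSet (isStar_Sf hn hg)
  have h1 : r ((PartialEquiv.ofSet (Sf n k)).trans (PartialEquiv.ofSet (Sf n f)))
      ((PartialEquiv.ofSet (Sf n k)).trans (PartialEquiv.ofSet (Sf n g))) :=
    (hr.2.2.2.2 _ _ _ hfs hgs hKs h).1
  have key : ∀ m : Euc n → ℝ, Adm m →
      (PartialEquiv.ofSet (Sf n k)).trans (PartialEquiv.ofSet (Sf n m)) ≈
        PartialEquiv.ofSet (Sf n (fun u => min (k u) (m u))) := by
    intro m hm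
    rw [← Sf_inter]
    apply idlike_eqOnSource
    · rw [trans_source, ofSet_source, ofSet_source, ofSet_coe, preimage_id]
    · intro x _
      rw [trans_apply, ofSet_coe, ofSet_coe, id, id]
  exact resp hr (sph_trans hKs hfs) (sph_ofSet (isStar_Sf hn (adm_min hk hf)))
    (sph_trans hKs hgs) (sph_ofSet (isStar_Sf hn (adm_min hk hg)))
    (key f hf) (key g hg) h1

lemma Prot (hf : Adm f) (hg : Adm g) (T : Euc n ≃ₗᵢ[ℝ] Euc n) (h : Prel r f g) :
    Prel r (fun u => f (T.symm u)) (fun u => g (T.symm u)) := by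
  set F := fun u : Euc n => max (f u) (g u) with hF
  have hFa : Adm F := adm_max hf hg
  set ψ := isoPE T (Sf n F) with hψ
  have hψs : IsStarPartialHomeo ψ := sph_isoPE T (isStar_Sf hn hFa)
  have hsub1 : Sf n f ⊆ ψ.source := by
    rw [hψ, isoPE_source]; exact Sf_mono (fun u _ => le_max_left _ _)
  have hsub2 : Sf n g ⊆ ψ.source := by
    rw [hψ, isoPE_source]; exact Sf_mono (fun u _ => le_max_right _ _)
  have hconj := congConj hr hψs (isStar_Sf hn hf) (isStar_Sf hn hg) hsub1 hsub2 h
  have himg : ∀ m : Euc n → ℝ, ψ '' Sf n m = Sf n (fun u => m (T.symm u)) := by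
    intro m
    have : (ψ : Euc n → Euc n) '' Sf n m = T '' Sf n m := by rw [hψ, isoPE_coe]
    rw [this, iso_image_Sf]
  rw [himg f, himg g] at hconj
  exact hconj

end P

end Star17
namespace Star17

open Set Metric PartialEquiv

variable {n : ℕ} {r : PartialEquiv (Euc n) (Euc n) → PartialEquiv (Euc n) (Euc n) → Prop}

lemma adm_one : Adm (fun _ : Euc n => (1:ℝ)) := ⟨continuousOn_const, fun _ _ => one_pos⟩

lemma isOpen_cap {h : Euc n → ℝ} (hh : ContinuousOn h (Metric.sphere (0 : Euc n) 1)) (θ : ℝ) :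
    IsOpen {y : Euc n | y ≠ 0 ∧ h (unitv y) < θ} := by
  have h1 : ContinuousOn (fun y : Euc n => h (unitv y)) {y : Euc n | y ≠ 0} :=
    hh.comp continuousOn_unitv unitv_mapsTo
  exact h1.isOpen_inter_preimage isOpen_ne (isOpen_Iio (a := θ))

variable (hn : 1 ≤ n) (hr : IsCongruence r)

include hn hr

lemma Pmeet_finset {ι : Type} (s : Finset ι) (hs : s.Nonempty) (F : ι → Euc n → ℝ)
    (hF : ∀ i ∈ s, Adm (F i))
    (hle : ∀ i ∈ s, ∀ u ∈ Metric.sphere (0 : Euc n) 1, F i u ≤ 1)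
    (hP : ∀ i ∈ s, Prel r (F i) (fun _ => 1)) :
    Adm (fun u => s.inf' hs (fun i => F i u)) ∧
      Prel r (fun u => s.inf' hs (fun i => F i u)) (fun _ => 1) := by
  induction hs using Finset.Nonempty.cons_induction with
  | singleton i =>
    simp only [Finset.inf'_singleton]
    exact ⟨hF i (Finset.mem_singleton_self i), hP i (Finset.mem_singleton_self i)⟩
  | cons i s hi hs IH =>
    have hmem : i ∈ Finset.cons i s hi := Finset.mem_cons_self i s
    have hFi : Adm (F i) := hF i hmem
    have hPi : Prel r (F i) (fun _ => 1) := hP i hmem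
    obtain ⟨IH1, IH2⟩ := IH (fun j hj => hF j (Finset.mem_cons_of_mem hj))
      (fun j hj => hle j (Finset.mem_cons_of_mem hj))
      (fun j hj => hP j (Finset.mem_cons_of_mem hj))
    set G := fun u => s.inf' hs (fun j => F j u) with hG
    have hGle1 : ∀ u ∈ Metric.sphere (0 : Euc n) 1, G u ≤ 1 := by
      intro u hu
      obtain ⟨j, hj⟩ := hs
      exact le_trans (Finset.inf'_le _ hj) (hle j (Finset.mem_cons_of_mem hj) u hu)
    have h1 : Prel r (fun u => min (G u) (F i u)) (fun u => min (G u) (1:ℝ)) :=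
      Pmeet hn hr hFi adm_one IH1 hPi
    have h2 : Prel r (fun u => min (G u) (F i u)) G :=
      Pcongr (fun u _ => rfl) (fun u hu => min_eq_left (hGle1 u hu)) h1
    have hadm : Adm (fun u => min (G u) (F i u)) := adm_min IH1 hFi
    have h3 : Prel r (fun u => min (G u) (F i u)) (fun _ => 1) :=
      Ptrans hn hr hadm IH1 adm_one h2 IH2
    have hfun : (fun u => (Finset.cons i s hi).inf' (Finset.cons_nonempty hi) (fun j => F j u))
        = fun u => min (F i u) (G u) := by
      funext u
      rw [Finset.inf'_cons hs]
    rw [hfun]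
    exact ⟨adm_min hFi IH1,
      Pcongr (fun u _ => min_comm (G u) (F i u)) (fun _ _ => rfl) h3⟩

end Star17

namespace Star17

open Set Metric PartialEquiv

variable {n : ℕ} {r : PartialEquiv (Euc n) (Euc n) → PartialEquiv (Euc n) (Euc n) → Prop}

lemma adm_inv {f : Euc n → ℝ} (hf : Adm f) : Adm (fun u => (f u)⁻¹) :=
  ⟨hf.1.inv₀ (fun u hu => (hf.2 u hu).ne'), fun u hu => inv_pos.2 (hf.2 u hu)⟩

variable (hn : 1 ≤ n) (hr : IsCongruence r)

include hn hr

lemma exists_squeeze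
    (hpair : ∃ A B : Set (Euc n), IsStar A ∧ IsStar B ∧ A ⊆ B ∧ A ≠ B ∧
      r (PartialEquiv.ofSet A) (PartialEquiv.ofSet B)) :
    ∃ (H : Euc n → ℝ) (θ : ℝ), Adm H ∧ 0 < θ ∧ θ < 1 ∧
      (∀ u ∈ Metric.sphere (0 : Euc n) 1, H u ≤ θ) ∧ Prel r H (fun _ => 1) := by
  obtain ⟨A, B, hA, hB, hAB, hne, hrel⟩ := hpair
  have ha : Adm (radial A) := isStar_radial_adm hA
  have hb : Adm (radial B) := isStar_radial_adm hB
  have hPab : Prel r (radial A) (radial B) := by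
    rw [Prel, ← isStar_eq_Sf hA, ← isStar_eq_Sf hB]; exact hrel
  set h : Euc n → ℝ := fun u => radial A u / radial B u with hhdef
  have hha : Adm h := adm_div ha hb
  have hP1 : Prel r h (fun _ => 1) := by
    have hmul := Pmult hn hr ha hb (adm_inv hb) hPab
    refine Pcongr (fun u hu => ?_) (fun u hu => ?_) hmul
    · show (radial B u)⁻¹ * radial A u = radial A u / radial B u
      rw [div_eq_inv_mul]
    · exact inv_mul_cancel₀ (hb.2 u hu).ne'
  obtain ⟨u₀, hu₀, hgap⟩ := radial_gap hA hB hAB hne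
  have hle1 : ∀ u ∈ Metric.sphere (0 : Euc n) 1, h u ≤ 1 := by
    intro u hu
    rw [hhdef]
    exact (div_le_one (hb.2 u hu)).2 (radial_mono hA hB hAB hu)
  have hh0 : h u₀ < 1 := (div_lt_one (hb.2 u₀ hu₀)).2 hgap
  have hhpos := hha.2
  set θ := (1 + h u₀) / 2 with hθdef
  have hθ0 : 0 < θ := by
    have := hha.2 u₀ hu₀
    rw [hθdef]; linarith
  have hθ1 : θ < 1 := by rw [hθdef]; linarith
  have hcap : h u₀ < θ := by rw [hθdef]; linarith
  -- covering
  set U := {y : Euc n | y ≠ 0 ∧ h (unitv y) < θ} with hUdef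
  have hUopen : IsOpen U := isOpen_cap hha.1 θ
  have hu₀U : u₀ ∈ U := by
    refine ⟨?_, ?_⟩
    · intro h0
      rw [h0, mem_sphere_iff_norm, sub_zero, norm_zero] at hu₀
      exact one_ne_zero hu₀.symm
    · rwa [unitv_sphere hu₀]
  have hTs : ∀ v : Metric.sphere (0 : Euc n) 1, ∃ T : Euc n ≃ₗᵢ[ℝ] Euc n, T u₀ = v :=
    fun v => exists_iso_sphere hn hu₀ v.2
  choose T hT using hTs
  set V := fun v : Metric.sphere (0 : Euc n) 1 => (T v) '' U with hVdef
  have hVopen : ∀ v, IsOpen (V v) := fun v => ((T v).toHomeomorph.isOpen_image).2 hUopen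
  have hcover : Metric.sphere (0 : Euc n) 1 ⊆ ⋃ v, V v := by
    intro w hw
    exact Set.mem_iUnion.2 ⟨⟨w, hw⟩, u₀, hu₀U, hT ⟨w, hw⟩⟩
  obtain ⟨t, ht⟩ := (isCompact_sphere (0 : Euc n) 1).elim_finite_subcover V hVopen hcover
  obtain ⟨u₀', hu₀'⟩ := sphere_nonempty' hn
  have htne : t.Nonempty := by
    obtain ⟨v, hvt⟩ := Set.mem_iUnion₂.1 (ht hu₀')
    exact ⟨v, hvt.1⟩
  set F := fun (v : Metric.sphere (0 : Euc n) 1) (u : Euc n) => h ((T v).symm u) with hFdef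
  have hsymm_sphere : ∀ (v : Metric.sphere (0 : Euc n) 1) (u : Euc n),
      u ∈ Metric.sphere (0 : Euc n) 1 → (T v).symm u ∈ Metric.sphere (0 : Euc n) 1 := by
    intro v u hu
    rw [mem_sphere_iff_norm, sub_zero] at hu ⊢
    rw [(T v).symm.norm_map, hu]
  have hFadm : ∀ v ∈ t, Adm (F v) := fun v _ => adm_comp_iso hha (T v)
  have hFle : ∀ v ∈ t, ∀ u ∈ Metric.sphere (0 : Euc n) 1, F v u ≤ 1 :=
    fun v _ u hu => hle1 _ (hsymm_sphere v u hu)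
  have hFP : ∀ v ∈ t, Prel r (F v) (fun _ => 1) :=
    fun v _ => Prot hn hr hha adm_one (T v) hP1
  obtain ⟨hHadm, hHP⟩ := Pmeet_finset hn hr t htne F hFadm hFle hFP
  refine ⟨fun u => t.inf' htne (fun v => F v u), θ, hHadm, hθ0, hθ1, ?_, hHP⟩
  intro u hu
  obtain ⟨v, hvt, huv⟩ := Set.mem_iUnion₂.1 (ht hu)
  obtain ⟨y, hyU, hyeq⟩ := huv
  have hyy : (T v).symm u = y := by rw [← hyeq, (T v).symm_apply_apply]
  have hysph : y ∈ Metric.sphere (0 : Euc n) 1 := by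
    rw [← hyy]; exact hsymm_sphere v u hu
  have hFvu : F v u < θ := by
    rw [hFdef]
    simp only
    rw [hyy]
    have := hyU.2
    rwa [unitv_sphere hysph] at this
  exact le_trans (Finset.inf'_le _ hvt) hFvu.le

lemma Ppow {H : Euc n → ℝ} (hH : Adm H) (hP : Prel r H (fun _ => 1)) :
    ∀ k : ℕ, Adm (fun u => (H u) ^ (k + 1)) ∧ Prel r (fun u => (H u) ^ (k + 1)) (fun _ => 1) := by
  intro k
  induction k with
  | zero =>
    have : (fun u => (H u) ^ (0 + 1)) = H := by funext u; rw [zero_add, pow_one]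
    rw [this]
    exact ⟨hH, hP⟩
  | succ k IH =>
    obtain ⟨IH1, IH2⟩ := IH
    have hfun : (fun u => H u * (H u) ^ (k + 1)) = fun u => (H u) ^ (k + 1 + 1) := by
      funext u; rw [← pow_succ']
    have h1 : Prel r (fun u => H u * (H u) ^ (k + 1)) (fun u => H u * 1) :=
      Pmult hn hr IH1 adm_one hH IH2
    have h2 : Prel r (fun u => (H u) ^ (k + 1 + 1)) H := by
      rw [← hfun]
      exact Pcongr (fun _ _ => rfl) (fun u _ => mul_one (H u)) h1
    have hadm : Adm (fun u => (H u) ^ (k + 1 + 1)) := by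
      rw [← hfun]; exact adm_mul hH IH1
    exact ⟨hadm, Ptrans hn hr hadm hH adm_one h2 hP⟩

lemma propagate
    (hpair : ∃ A B : Set (Euc n), IsStar A ∧ IsStar B ∧ A ⊆ B ∧ A ≠ B ∧
      r (PartialEquiv.ofSet A) (PartialEquiv.ofSet B)) :
    ∀ f g : Euc n → ℝ, Adm f → Adm g → Prel r f g := by
  obtain ⟨H, θ, hH, hθ0, hθ1, hHθ, hPH⟩ := exists_squeeze hn hr hpair
  suffices key : ∀ f g : Euc n → ℝ, Adm f → Adm g →
      Prel r (fun u => min (f u) (g u)) g by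
    intro f g hf hg
    have h1 := key f g hf hg
    have h2 := key g f hg hf
    have h2' : Prel r (fun u => min (f u) (g u)) f :=
      Pcongr (fun u _ => min_comm (g u) (f u)) (fun _ _ => rfl) h2
    exact Ptrans hn hr hf (adm_min hf hg) hg
      (Psymm hn hr (adm_min hf hg) hf h2') h1
  intro f g hf hg
  obtain ⟨Cg, hCg0, hCg⟩ := adm_bound hg.1
  obtain ⟨umin, humin, hminon⟩ := (isCompact_sphere (0 : Euc n) 1).exists_isMinOn
    (sphere_nonempty' hn) hf.1
  have hmf0 : 0 < f umin := hf.2 _ humin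
  obtain ⟨k, hk⟩ := exists_pow_lt_of_lt_one
    (show (0:ℝ) < f umin / (Cg + 1) by positivity) hθ1
  obtain ⟨hEadm, hEP⟩ := Ppow hn hr hH hPH k
  set E := fun u => (H u) ^ (k + 1) with hEdef
  have hEθ : ∀ u ∈ Metric.sphere (0 : Euc n) 1, E u ≤ θ ^ (k + 1) := by
    intro u hu
    exact pow_le_pow_left₀ (hH.2 u hu).le (hHθ u hu) (k + 1)
  have hθk : θ ^ (k + 1) < f umin / (Cg + 1) := by
    calc θ ^ (k + 1) = θ ^ k * θ := pow_succ θ k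
      _ ≤ θ ^ k * 1 := by nlinarith [pow_pos hθ0 k]
      _ = θ ^ k := mul_one _
      _ < f umin / (Cg + 1) := hk
  have hEle1 : ∀ u ∈ Metric.sphere (0 : Euc n) 1, E u ≤ 1 := by
    intro u hu
    exact le_trans (hEθ u hu) (pow_le_one₀ hθ0.le hθ1.le)
  set w := fun u => g u * E u with hwdef
  have hwadm : Adm w := adm_mul hg hEadm
  have hPw : Prel r w g := by
    have := Pmult hn hr hEadm adm_one hg hEP
    exact Pcongr (fun _ _ => rfl) (fun u _ => mul_one (g u)) this
  have hwle : ∀ u ∈ Metric.sphere (0 : Euc n) 1, w u ≤ min (f u) (g u) := by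
    intro u hu
    show g u * E u ≤ min (f u) (g u)
    have hgu : g u ≤ Cg := le_trans (le_abs_self _) (hCg u hu)
    have hEu : E u < f umin / (Cg + 1) := lt_of_le_of_lt (hEθ u hu) hθk
    have hEu0 : 0 ≤ E u := (pow_pos (hH.2 u hu) (k+1)).le
    have hgu0 : 0 < g u := hg.2 u hu
    have hfmin : f umin ≤ f u := hminon hu
    refine le_min ?_ ?_
    · have h1 : g u * E u ≤ (Cg + 1) * (f umin / (Cg + 1)) := by nlinarith
      have h2 : (Cg + 1) * (f umin / (Cg + 1)) = f umin := by field_simp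
      linarith
    · nlinarith [hEle1 u hu]
  have hmeet := Pmeet hn hr hwadm hg hf hPw
  -- hmeet : Prel r (fun u => min (f u) (w u)) (fun u => min (f u) (g u))
  have hmeet' : Prel r w (fun u => min (f u) (g u)) := by
    refine Pcongr (fun u hu => ?_) (fun _ _ => rfl) hmeet
    exact min_eq_right (le_trans (hwle u hu) (min_le_left _ _))
  exact Ptrans hn hr (adm_min hf hg) hwadm hg
    (Psymm hn hr hwadm (adm_min hf hg) hmeet') hPw

end Star17
namespace Star17

open Set Metric PartialEquiv

variable {n : ℕ} {r : PartialEquiv (Euc n) (Euc n) → PartialEquiv (Euc n) (Euc n) → Prop}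

lemma exclStar {p q : Euc n} (hp : p ≠ 0) (hq : q ≠ 0)
    (hcond : unitv p = unitv q → ‖p‖ < ‖q‖) :
    ∃ f : Euc n → ℝ, Adm f ∧ p ∈ Sf n f ∧ q ∉ Sf n f := by
  classical
  set d₀ : ℝ := if unitv p = unitv q then 1 else dist (unitv p) (unitv q) with hd₀
  have hd₀pos : 0 < d₀ := by
    rw [hd₀]
    split_ifs with h
    · exact one_pos
    · exact dist_pos.2 (fun hc => h hc)
  set δ : ℝ := min ‖p‖ ‖q‖ / 2 with hδ
  have hp0 : 0 < ‖p‖ := norm_pos_iff.2 hp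
  have hq0 : 0 < ‖q‖ := norm_pos_iff.2 hq
  have hδ0 : 0 < δ := by rw [hδ]; positivity
  have hδp : δ ≤ ‖p‖ / 2 := by
    rw [hδ]; have := min_le_left ‖p‖ ‖q‖; linarith
  have hδq : δ ≤ ‖q‖ / 2 := by
    rw [hδ]; have := min_le_right ‖p‖ ‖q‖; linarith
  set f : Euc n → ℝ := fun u => δ + (‖p‖ - δ) * max 0 (1 - dist u (unitv p) / d₀) with hf
  have hcont : Continuous f := by
    apply continuous_const.add
    apply continuous_const.mul
    apply continuous_const.max
    apply continuous_const.sub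
    exact (continuous_id.dist continuous_const).div_const d₀
  have hfadm : Adm f := by
    refine ⟨hcont.continuousOn, fun u _ => ?_⟩
    have h1 : (0:ℝ) ≤ max 0 (1 - dist u (unitv p) / d₀) := le_max_left _ _
    have h2 : (0:ℝ) ≤ ‖p‖ - δ := by linarith
    have : (0:ℝ) ≤ (‖p‖ - δ) * max 0 (1 - dist u (unitv p) / d₀) := mul_nonneg h2 h1
    rw [hf]
    simp only
    linarith
  have hfp : f (unitv p) = ‖p‖ := by
    rw [hf]
    simp only [dist_self, zero_div, sub_zero, max_eq_right zero_le_one, mul_one]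
    ring
  have hfq : f (unitv q) < ‖q‖ := by
    rcases eq_or_ne (unitv p) (unitv q) with he | he
    · have hlt := hcond he
      rw [hf]
      simp only [← he, dist_self, zero_div, sub_zero, max_eq_right zero_le_one, mul_one]
      linarith
    · have hdist : dist (unitv q) (unitv p) = d₀ := by
        rw [hd₀, if_neg he, dist_comm]
      rw [hf]
      simp only [hdist, div_self hd₀pos.ne', sub_self, max_self, mul_zero, add_zero]
      linarith
  refine ⟨f, hfadm, ?_, ?_⟩
  · exact Or.inr (by rw [hfp])
  · intro hmem
    rcases hmem with h0 | hle
    · exact hq h0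
    · linarith

end Star17

namespace Star17

open Set Metric PartialEquiv

variable {n : ℕ} {r : PartialEquiv (Euc n) (Euc n) → PartialEquiv (Euc n) (Euc n) → Prop}
variable (hn : 1 ≤ n) (hr : IsCongruence r)

include hn hr

lemma half_step {α β : PartialEquiv (Euc n) (Euc n)}
    (hα : IsStarPartialHomeo α) (hβ : IsStarPartialHomeo β) (hrel : r α β) :
    (β.source ⊆ α.source ∧ Set.EqOn α β β.source) ∨
    (∃ A B : Set (Euc n), IsStar A ∧ IsStar B ∧ A ⊆ B ∧ A ≠ B ∧
      r (PartialEquiv.ofSet A) (PartialEquiv.ofSet B)) := by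
  set L := β.source with hLdef
  have hL : IsStar L := hβ.1
  set e := PartialEquiv.ofSet L with hedef
  have hes : IsStarPartialHomeo e := sph_ofSet hL
  set σ₀ := α.trans β.symm with hσ₀def
  have hσ₀s : IsStarPartialHomeo σ₀ := sph_trans hα (sph_symm hβ)
  have h0 : r σ₀ e := by
    have step := (hr.2.2.2.2 α β β.symm hα hβ (sph_symm hβ) hrel).2
    exact resp hr (sph_trans hα (sph_symm hβ)) hσ₀s
      (sph_trans hβ (sph_symm hβ)) hes (Setoid.refl σ₀) (self_trans_symm β) step
  set σ₁ := e.trans σ₀ with hσ₁def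
  have hσ₁s : IsStarPartialHomeo σ₁ := sph_trans hes hσ₀s
  have h1 : r σ₁ e := by
    have step := (hr.2.2.2.2 σ₀ e e hσ₀s hes hes h0).1
    have hee : e.trans e ≈ e := by
      apply idlike_eqOnSource
      · rw [trans_source, hedef, ofSet_source, ofSet_coe, preimage_id, Set.inter_self]
      · intro x _
        simp only [trans_apply, hedef, ofSet_coe, id_eq]
    exact resp hr (sph_trans hes hσ₀s) hσ₁s (sph_trans hes hes) hes
      (Setoid.refl σ₁) hee step
  have hσ₁src : σ₁.source = L ∩ σ₀.source := by
    rw [hσ₁def, trans_source, hedef, ofSet_source, ofSet_coe, preimage_id]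
  have hsub : σ₁.source ⊆ L := by rw [hσ₁src]; exact Set.inter_subset_left
  have hσ₁coe : ∀ x, σ₁ x = β.symm (α x) := by
    intro x
    simp only [hσ₁def, hσ₀def, trans_apply, hedef, ofSet_coe, id_eq]
  by_cases hss : σ₁.source = L
  · by_cases hfix : ∀ x ∈ σ₁.source, σ₁ x = x
    · left
      have hLs : L ⊆ σ₀.source := by
        intro x hx
        have : x ∈ L ∩ σ₀.source := by rw [← hσ₁src, hss]; exact hx
        exact this.2
      have hσ₀src : σ₀.source = α.source ∩ α ⁻¹' β.target := by
        rw [hσ₀def, trans_source, symm_source]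
      constructor
      · intro x hx
        have := hLs hx
        rw [hσ₀src] at this
        exact this.1
      · intro x hx
        have hx' : x ∈ σ₁.source := by rw [hss]; exact hx
        have hfx := hfix x hx'
        rw [hσ₁coe x] at hfx
        have hαx : α x ∈ β.target := by
          have := hLs hx
          rw [hσ₀src] at this
          exact this.2
        calc α x = β (β.symm (α x)) := (β.right_inv hαx).symm
          _ = β x := by rw [hfx]
    · right
      push_neg at hfix
      obtain ⟨x₀, hx₀src, hx₀ne⟩ := hfix
      have h0src : (0 : Euc n) ∈ σ₁.source := by
        rw [hss]; exact interior_subset hL.2.1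
      have hσ₁0 : σ₁ 0 = 0 := hσ₁s.2.2.2.2.1
      have hx₀0 : x₀ ≠ 0 := by
        rintro rfl
        exact hx₀ne hσ₁0
      set z₀ := σ₁ x₀ with hz₀def
      have hz₀0 : z₀ ≠ 0 := by
        intro hc
        apply hx₀0
        apply σ₁.injOn hx₀src h0src
        rw [hσ₁0, ← hz₀def]
        exact hc
      by_cases hcase : unitv x₀ = unitv z₀ → ‖x₀‖ < ‖z₀‖
      · obtain ⟨f, hfadm, hpK, hqK⟩ := exclStar hx₀0 hz₀0 hcase
        have hK : IsStar (Sf n f) := isStar_Sf hn hfadm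
        obtain ⟨A, hAstar, hAsub, hAmem, hArel⟩ := congCompress hr hσ₁s hL hK hsub h1
        refine ⟨A, Sf n f ∩ L, hAstar, isStar_inter hK hL, hAsub, ?_, hArel⟩
        intro hc
        have hx₀KL : x₀ ∈ Sf n f ∩ L := ⟨hpK, hsub hx₀src⟩
        rw [← hc] at hx₀KL
        have hmem := (hAmem x₀).1 hx₀KL
        apply hqK
        rw [hz₀def]
        exact hmem.2.2
      · push_neg at hcase
        obtain ⟨huv, hnorm⟩ := hcase
        have hlt : ‖z₀‖ < ‖x₀‖ := by
          rcases lt_or_eq_of_le hnorm with h | h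
          · exact h
          · exfalso
            apply hx₀ne
            have hzx : z₀ = x₀ := by
              calc z₀ = ‖z₀‖ • unitv z₀ := (smul_unitv hz₀0).symm
                _ = ‖x₀‖ • unitv x₀ := by rw [h, ← huv]
                _ = x₀ := smul_unitv hx₀0
            exact hzx
        obtain ⟨f, hfadm, hpK, hqK⟩ := exclStar hz₀0 hx₀0 (fun _ => hlt)
        have hK : IsStar (Sf n f) := isStar_Sf hn hfadm
        have hsymmrel : r σ₁.symm (PartialEquiv.ofSet σ₁.target) :=
          congSymmRel hr hσ₁s hL hsub h1
        have hTstar : IsStar σ₁.target := hσ₁s.2.1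
        have hsub' : σ₁.symm.source ⊆ σ₁.target := by rw [symm_source]
        obtain ⟨A, hAstar, hAsub, hAmem, hArel⟩ :=
          congCompress hr (sph_symm hσ₁s) hTstar hK hsub' hsymmrel
        refine ⟨A, Sf n f ∩ σ₁.target, hAstar, isStar_inter hK hTstar, hAsub, ?_, hArel⟩
        intro hc
        have hz₀T : z₀ ∈ σ₁.target := by rw [hz₀def]; exact σ₁.map_source hx₀src
        have hz₀KL : z₀ ∈ Sf n f ∩ σ₁.target := ⟨hpK, hz₀T⟩
        rw [← hc] at hz₀KL
        have hmem := (hAmem z₀).1 hz₀KL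
        have hsymmz : σ₁.symm z₀ = x₀ := by rw [hz₀def]; exact σ₁.left_inv hx₀src
        rw [hsymmz] at hmem
        exact hqK hmem.2.2
  · right
    refine ⟨σ₁.source, L, hσ₁s.1, hL, hsub, hss, congE2 hr hσ₁s hL hsub h1⟩

end Star17
theorem stmt_17 (n : ℕ) (hn : 1 ≤ n)
    (r : PartialEquiv (EuclideanSpace ℝ (Fin n)) (EuclideanSpace ℝ (Fin n)) →
         PartialEquiv (EuclideanSpace ℝ (Fin n)) (EuclideanSpace ℝ (Fin n)) → Prop)
    (hr : IsCongruence r)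
    (hnontriv : ∃ α β : PartialEquiv (EuclideanSpace ℝ (Fin n)) (EuclideanSpace ℝ (Fin n)),
      IsStarPartialHomeo α ∧ IsStarPartialHomeo β ∧ r α β ∧ ¬(α ≈ β)) :
    ∀ L₁ L₂ : Set (EuclideanSpace ℝ (Fin n)), IsStar L₁ → IsStar L₂ →
      r (PartialEquiv.ofSet L₁) (PartialEquiv.ofSet L₂) := by
  obtain ⟨α, β, hα, hβ, hrel, hne⟩ := hnontriv
  have hpair : ∃ A B : Set (EuclideanSpace ℝ (Fin n)), IsStar A ∧ IsStar B ∧ A ⊆ B ∧ A ≠ B ∧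
      r (PartialEquiv.ofSet A) (PartialEquiv.ofSet B) := by
    rcases Star17.half_step hn hr hα hβ hrel with hdeg1 | hp
    · rcases Star17.half_step hn hr hβ hα (hr.2.1 _ _ hα hβ hrel) with hdeg2 | hp
      · exfalso
        apply hne
        have hsrc : α.source = β.source := Set.Subset.antisymm hdeg2.1 hdeg1.1
        exact ⟨hsrc, fun x hx => hdeg1.2 (hsrc ▸ hx)⟩
      · exact hp
    · exact hp
  intro L₁ L₂ hL₁ hL₂
  have hmain := Star17.propagate hn hr hpair (radial L₁) (radial L₂)
      (Star17.isStar_radial_adm hL₁) (Star17.isStar_radial_adm hL₂)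
  rwa [Star17.Prel, ← Star17.isStar_eq_Sf hL₁, ← Star17.isStar_eq_Sf hL₂] at hmain
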